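/- For every real t, φ(t)² ≤ Φ(t)·Φ(−t). (Equivalently, the Fisher information loss of the stochastic sign mechanism with noise scale σ, η^{Sgn}(θ) = φ(θ/σ) / ( σ·√(Φ(θ/σ)·Φ(−θ/σ)) ), is at most the Fisher information loss 1/σ of the Gaussian mechanism, for every location parameter θ.) -/

import Mathlib

open MeasureTheory Real Filter Topology

noncomputable def phi (x : ℝ) : ℝ := (Real.sqrt (2 * Real.pi))⁻¹ * Real.exp (-(x ^ 2) / 2)

noncomputable def Phi (x : ℝ) : ℝ := ∫ t in Set.Iic x, phi t

lemma phi_cont : Continuous phi := by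
  unfold phi; fun_prop

lemma phi_nonneg (x : ℝ) : 0 ≤ phi x := by
  unfold phi; positivity

lemma phi_neg (x : ℝ) : phi (-x) = phi x := by
  unfold phi; ring_nf

lemma phi_integrable : Integrable phi := by
  have h : Integrable (fun x : ℝ => Real.exp (-(1/2 : ℝ) * x ^ 2)) :=
    integrable_exp_neg_mul_sq (by norm_num)
  have := h.const_mul (Real.sqrt (2 * Real.pi))⁻¹
  refine this.congr (Eventually.of_forall fun x => ?_)
  unfold phi; ring_nf

lemma hasDerivAt_phi (x : ℝ) : HasDerivAt phi (-x * phi x) x := by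
  have h1 : HasDerivAt (fun y : ℝ => -(y ^ 2) / 2) (-x) x := by
    have := ((hasDerivAt_pow 2 x).neg).div_const 2
    simpa using this.congr_deriv (by ring)
  have h2 := (h1.exp).const_mul (Real.sqrt (2 * Real.pi))⁻¹
  unfold phi
  refine h2.congr_deriv ?_
  ring

lemma hasDerivAt_Phi (x : ℝ) : HasDerivAt Phi (phi x) x := by
  have key : ∀ y : ℝ, Phi y = Phi 0 + ∫ s in (0:ℝ)..y, phi s := by
    intro y
    have := intervalIntegral.integral_Iic_sub_Iic (phi_integrable.integrableOn)
      (phi_integrable.integrableOn) (a := (0:ℝ)) (b := y) (μ := volume)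
    unfold Phi
    linarith [this]
  have hd : HasDerivAt (fun u => ∫ s in (0:ℝ)..u, phi s) (phi x) x :=
    intervalIntegral.integral_hasDerivAt_right
      (phi_integrable.intervalIntegrable)
      (phi_cont.stronglyMeasurable.stronglyMeasurableAtFilter)
      (phi_cont.continuousAt)
  have := (hd.const_add (Phi 0))
  refine this.congr_of_eventuallyEq (Eventually.of_forall fun y => (key y))

lemma Phi_nonneg (x : ℝ) : 0 ≤ Phi x :=
  integral_nonneg fun t => phi_nonneg t

lemma Phi_le (x : ℝ) : Phi x ≤ ∫ y, phi y :=
  setIntegral_le_integral phi_integrable (Eventually.of_forall fun t => phi_nonneg t)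

lemma tendsto_Phi_atBot : Tendsto Phi atBot (𝓝 0) := by
  have h := MeasureTheory.intervalIntegral_tendsto_integral_Iic 0
    (phi_integrable.integrableOn) (tendsto_id (α := ℝ) (x := atBot))
  have heq : ∀ x : ℝ, Phi x = Phi 0 - ∫ s in x..(0:ℝ), phi s := by
    intro x
    have := intervalIntegral.integral_Iic_sub_Iic (phi_integrable.integrableOn)
      (phi_integrable.integrableOn) (a := x) (b := (0:ℝ)) (μ := volume)
    unfold Phi; linarith [this]
  have : Tendsto (fun x : ℝ => Phi 0 - ∫ s in x..(0:ℝ), phi s) atBot (𝓝 (Phi 0 - Phi 0)) :=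
    (tendsto_const_nhds.sub h)
  simpa using this.congr fun x => (heq x).symm

noncomputable def hfun (t : ℝ) : ℝ := Phi (-t) - Phi t + 2 * t * phi t

noncomputable def gfun (t : ℝ) : ℝ := Phi t * Phi (-t) - phi t ^ 2

lemma hasDerivAt_Phi_neg (t : ℝ) : HasDerivAt (fun s => Phi (-s)) (-phi t) t := by
  have := (hasDerivAt_Phi (-t)).comp t (hasDerivAt_neg t)
  simpa [phi_neg, Function.comp_def] using this

lemma hasDerivAt_hfun (t : ℝ) : HasDerivAt hfun (-2 * t ^ 2 * phi t) t := by
  have h1 := hasDerivAt_Phi_neg t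
  have h2 := hasDerivAt_Phi t
  have h3 : HasDerivAt (fun s : ℝ => 2 * s * phi s) (2 * phi t + 2 * t * (-t * phi t)) t := by
    have := ((hasDerivAt_id t).const_mul 2).mul (hasDerivAt_phi t)
    simp only [id_eq] at this
    exact this.congr_deriv (by ring)
  have := (h1.sub h2).add h3
  unfold hfun
  exact this.congr_deriv (by ring)

lemma hasDerivAt_gfun (t : ℝ) : HasDerivAt gfun (phi t * hfun t) t := by
  have h1 := (hasDerivAt_Phi t).mul (hasDerivAt_Phi_neg t)
  have h2 := (hasDerivAt_phi t).pow 2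
  have := h1.sub h2
  unfold gfun hfun
  exact this.congr_deriv (by ring)

lemma hfun_nonpos {t : ℝ} (ht : 0 ≤ t) : hfun t ≤ 0 := by
  have hanti : AntitoneOn hfun (Set.Ici 0) := by
    apply antitoneOn_of_deriv_nonpos (convex_Ici 0)
    · exact fun x _ => ((hasDerivAt_hfun x).continuousAt).continuousWithinAt
    · exact fun x _ => ((hasDerivAt_hfun x).differentiableAt).differentiableWithinAt
    · intro x hx
      rw [(hasDerivAt_hfun x).deriv]
      have := phi_nonneg x
      nlinarith
  have h0 : hfun 0 = 0 := by unfold hfun; simp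
  calc hfun t ≤ hfun 0 := hanti (Set.mem_Ici.mpr le_rfl) (Set.mem_Ici.mpr ht) ht
    _ = 0 := h0

lemma gfun_anti : AntitoneOn gfun (Set.Ici 0) := by
  apply antitoneOn_of_deriv_nonpos (convex_Ici 0)
  · exact fun x _ => ((hasDerivAt_gfun x).continuousAt).continuousWithinAt
  · exact fun x _ => ((hasDerivAt_gfun x).differentiableAt).differentiableWithinAt
  · intro x hx
    rw [(hasDerivAt_gfun x).deriv]
    have h1 := phi_nonneg x
    have h2 : hfun x ≤ 0 := hfun_nonpos (le_of_lt (by simpa using hx))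
    exact mul_nonpos_of_nonneg_of_nonpos h1 h2

lemma tendsto_phi_atTop : Tendsto phi atTop (𝓝 0) := by
  have h1 : Tendsto (fun t : ℝ => -(t ^ 2) / 2) atTop atBot := by
    apply Tendsto.atBot_div_const (by norm_num)
    exact tendsto_neg_atBot_iff.mpr (tendsto_pow_atTop (by norm_num))
  have h2 : Tendsto (fun t : ℝ => Real.exp (-(t ^ 2) / 2)) atTop (𝓝 0) :=
    Real.tendsto_exp_atBot.comp h1
  have h3 := h2.const_mul (Real.sqrt (2 * Real.pi))⁻¹
  rw [mul_zero] at h3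
  exact h3

lemma tendsto_gfun_atTop : Tendsto gfun atTop (𝓝 0) := by
  have hPhiNeg : Tendsto (fun t : ℝ => Phi (-t)) atTop (𝓝 0) :=
    tendsto_Phi_atBot.comp tendsto_neg_atTop_atBot
  have hmul : Tendsto (fun t : ℝ => Phi t * Phi (-t)) atTop (𝓝 0) := by
    apply squeeze_zero (fun t => mul_nonneg (Phi_nonneg t) (Phi_nonneg (-t)))
      (g := fun t => (∫ y, phi y) * Phi (-t))
    · intro t
      exact mul_le_mul_of_nonneg_right (Phi_le t) (Phi_nonneg (-t))
    · simpa using hPhiNeg.const_mul (∫ y, phi y)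
  have hphi2 : Tendsto (fun t : ℝ => phi t ^ 2) atTop (𝓝 0) := by
    simpa using (tendsto_phi_atTop.pow 2)
  exact (by simpa using hmul.sub hphi2 : Tendsto (fun x => Phi x * Phi (-x) - phi x ^ 2) atTop (𝓝 0))

/-- The Fisher information of the stochastic sign mechanism is at most that of
the Gaussian mechanism: `φ(t)² ≤ Φ(t)·Φ(−t)` for all `t`. -/
theorem stochastic_sign_fisher_info_le (t : ℝ) : phi t ^ 2 ≤ Phi t * Phi (-t) := by
  have key : ∀ s : ℝ, 0 ≤ s → phi s ^ 2 ≤ Phi s * Phi (-s) := by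
    intro s hs
    have h0 : (0 : ℝ) ≤ gfun s := by
      apply le_of_tendsto tendsto_gfun_atTop
      filter_upwards [eventually_ge_atTop s] with u hu
      exact gfun_anti (Set.mem_Ici.mpr hs) (Set.mem_Ici.mpr (hs.trans hu)) hu
    unfold gfun at h0; linarith
  rcases le_total 0 t with h | h
  · exact key t h
  · have := key (-t) (by linarith)
    rwa [phi_neg, neg_neg, mul_comm] at this
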